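/- arXiv:2007.01612 — 3 statements merged into one kernel-verified Lean document; each statement's English description precedes it below -/
import Mathlib

section
/- Let Σ be a symmetric positive definite d×d matrix with trace(Σ) ≤ σ²d, and let 0 < β ≤ 1/(2σ²). Then β² · Σ_{k=0}^{M} trace(Σ · Σ · (I - β(2 - βσ²)Σ)^k) ≤ (β · trace(Σ))/(2 - βσ²) ≤ d/3, provided additionally ‖Σ‖ ≤ σ² so that I - β(2-βσ²)Σ ⪰ 0. -/
open scoped Matrix.Norms.L2Operator
open scoped MatrixOrder

lemma psd_trace_nonneg {d : ℕ} {A : Matrix (Fin d) (Fin d) ℝ} (hA : A.PosSemidef) :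
    0 ≤ A.trace := by
  exact hA.trace_nonneg

lemma psd_trace_mul_nonneg {d : ℕ} {A B : Matrix (Fin d) (Fin d) ℝ}
    (hA : A.PosSemidef) (hB : B.PosSemidef) : 0 ≤ (A * B).trace := by
  have hS : CFC.sqrt A ^ 2 = A := CFC.sq_sqrt A hA.nonneg
  have hherm : (CFC.sqrt A).conjTranspose = CFC.sqrt A := (Matrix.nonneg_iff_posSemidef.mp (CFC.sqrt_nonneg A)).1
  have h1 : A * B = CFC.sqrt A * (CFC.sqrt A * B) := by rw [← mul_assoc, ← pow_two, hS]
  rw [h1, Matrix.trace_mul_comm]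
  have h2 : CFC.sqrt A * B * CFC.sqrt A = (CFC.sqrt A).conjTranspose * B * CFC.sqrt A := by rw [hherm]
  rw [mul_assoc, ← mul_assoc]
  rw [h2]
  exact psd_trace_nonneg (hB.conjTranspose_mul_mul_same _)

theorem trace_geometric_sum_bound {d : ℕ} (Sig : Matrix (Fin d) (Fin d) ℝ)
    (hSig : Sig.PosDef) (σ : ℝ) (hσ : 0 < σ)
    (htr : Sig.trace ≤ σ ^ 2 * d)
    (β : ℝ) (hβ : 0 < β) (hβσ : β ≤ 1 / (2 * σ ^ 2))
    (hnorm : ‖Sig‖ ≤ σ ^ 2) (M : ℕ) :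
    β ^ 2 * ∑ k ∈ Finset.range (M + 1),
        (Sig * Sig * (1 - (β * (2 - β * σ ^ 2)) • Sig) ^ k).trace
      ≤ β * Sig.trace / (2 - β * σ ^ 2) ∧
    β * Sig.trace / (2 - β * σ ^ 2) ≤ d / 3 := by
  have hσ2 : (0:ℝ) < σ ^ 2 := by positivity
  have hβσ2 : β * σ ^ 2 ≤ 1 / 2 := by
    rw [le_div_iff₀ (by positivity)] at hβσ
    nlinarith
  set c : ℝ := β * (2 - β * σ ^ 2) with hc
  have h2βσ : (3:ℝ)/2 ≤ 2 - β * σ ^ 2 := by nlinarith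
  have hcpos : 0 < c := by nlinarith
  have hcσ : c * σ ^ 2 ≤ 1 := by nlinarith [sq_nonneg (1 - β * σ ^ 2), sq_nonneg (β * σ^2)]
  -- T is PSD
  set T : Matrix (Fin d) (Fin d) ℝ := 1 - c • Sig with hT
  have hnormSig : 0 ≤ ‖Sig‖ := norm_nonneg _
  have hTpsd : T.PosSemidef := by
    refine Matrix.PosSemidef.of_dotProduct_mulVec_nonneg ?_ ?_
    · exact (Matrix.isHermitian_one).sub (by simpa [Matrix.IsHermitian] using congrArg (c • ·) hSig.1.eq)
    · intro x
      have hdot : ∀ y z : Fin d → ℝ,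
          dotProduct y z = @inner ℝ _ _ ((WithLp.equiv 2 _).symm y : EuclideanSpace ℝ (Fin d)) ((WithLp.equiv 2 _).symm z) := by
        intro y z
        simp [EuclideanSpace.inner_eq_star_dotProduct, dotProduct_comm]
      have hCS : dotProduct x (Sig.mulVec x) ≤ ‖Sig‖ * dotProduct x x := by
        rw [hdot x (Sig.mulVec x), hdot x x]
        set y : EuclideanSpace ℝ (Fin d) := (WithLp.equiv 2 _).symm x with hy
        have h1 : @inner ℝ _ _ y ((WithLp.equiv 2 _).symm (Sig.mulVec x) : EuclideanSpace ℝ (Fin d))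
            ≤ ‖y‖ * ‖((WithLp.equiv 2 _).symm (Sig.mulVec x) : EuclideanSpace ℝ (Fin d))‖ :=
          real_inner_le_norm _ _
        have h2 : ‖((EuclideanSpace.equiv (Fin d) ℝ).symm (Sig.mulVec x) : EuclideanSpace ℝ (Fin d))‖ ≤ ‖Sig‖ * ‖y‖ :=
          Sig.l2_opNorm_mulVec y
        have h3 : @inner ℝ _ _ y y = ‖y‖ ^ 2 := real_inner_self_eq_norm_sq y
        have h4 : ‖((WithLp.equiv 2 _).symm (Sig.mulVec x) : EuclideanSpace ℝ (Fin d))‖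
            = ‖((EuclideanSpace.equiv (Fin d) ℝ).symm (Sig.mulVec x) : EuclideanSpace ℝ (Fin d))‖ := rfl
        rw [h3]
        nlinarith [norm_nonneg y]
      have hxx : 0 ≤ dotProduct x x := by simpa using dotProduct_self_star_nonneg x
      have hSx : 0 ≤ dotProduct x (Sig.mulVec x) := by
        simpa using hSig.posSemidef.dotProduct_mulVec_nonneg x
      have expand : dotProduct (star x) (T.mulVec x)
          = dotProduct x x - c * dotProduct x (Sig.mulVec x) := by
        simp [hT, Matrix.sub_mulVec, Matrix.smul_mulVec, dotProduct_sub,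
          dotProduct_smul, smul_eq_mul]
      rw [expand]
      nlinarith
  -- telescoping identity
  set S : Matrix (Fin d) (Fin d) ℝ := ∑ k ∈ Finset.range (M + 1), T ^ k with hSdef
  have htel : (1 - T) * S = 1 - T ^ (M + 1) := by
    have h2 : S * (T - 1) = T ^ (M + 1) - 1 := geom_sum_mul T (M + 1)
    have h3 : T * S = S * T :=
      (Commute.sum_right _ _ _ fun k _ => (Commute.refl T).pow_right k).eq
    have h4 : S * T = T ^ (M + 1) - 1 + S := by
      rw [mul_sub, mul_one] at h2
      rw [eq_sub_iff_add_eq] at h2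
      rw [← h2]
      abel
    rw [sub_mul, one_mul, h3, h4]
    abel
  -- sum of traces
  have hsum : ∑ k ∈ Finset.range (M + 1), (Sig * Sig * T ^ k).trace
      = (Sig * (Sig * S)).trace := by
    rw [hSdef, Finset.mul_sum, Finset.mul_sum, Matrix.trace_sum]
    exact Finset.sum_congr rfl fun k _ => by rw [mul_assoc]
  have hone : (1 : Matrix (Fin d) (Fin d) ℝ) - T = c • Sig := by
    rw [hT]; abel
  have key : c * ∑ k ∈ Finset.range (M + 1), (Sig * Sig * T ^ k).trace
      = Sig.trace - (Sig * T ^ (M + 1)).trace := by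
    rw [hsum, ← smul_eq_mul, ← Matrix.trace_smul]
    have : c • (Sig * (Sig * S)) = Sig * ((c • Sig) * S) := by
      simp only [mul_smul_comm, smul_mul_assoc]
    rw [this, ← hone, htel, mul_sub, mul_one, Matrix.trace_sub]
  have hN : 0 ≤ (Sig * T ^ (M + 1)).trace :=
    psd_trace_mul_nonneg hSig.posSemidef (hTpsd.pow (M + 1))
  have htrnn : 0 ≤ Sig.trace := psd_trace_nonneg hSig.posSemidef
  have hd : (0:ℝ) ≤ (d:ℝ) := Nat.cast_nonneg d
  constructor
  · rw [le_div_iff₀ (by linarith : (0:ℝ) < 2 - β * σ ^ 2)]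
    set X := ∑ k ∈ Finset.range (M + 1), (Sig * Sig * T ^ k).trace with hX
    rw [hc] at key
    have h5 : β ^ 2 * X * (2 - β * σ ^ 2)
        = β * Sig.trace - β * (Sig * T ^ (M + 1)).trace := by
      linear_combination β * key
    have h6 : 0 ≤ β * (Sig * T ^ (M + 1)).trace := mul_nonneg hβ.le hN
    linarith
  · rw [div_le_iff₀ (by linarith : (0:ℝ) < 2 - β * σ ^ 2)]
    have h7 : β * Sig.trace ≤ β * (σ ^ 2 * d) := mul_le_mul_of_nonneg_left htr hβ.le
    have h8 : β * σ ^ 2 * d ≤ (1/2) * d := mul_le_mul_of_nonneg_right hβσ2 hd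
    have h9 : (d:ℝ) / 3 * (3/2) ≤ (d:ℝ) / 3 * (2 - β * σ ^ 2) :=
      mul_le_mul_of_nonneg_left h2βσ (by positivity)
    nlinarith
end

section
/- Let u = (u₁,…,u_H) and u' = (u'₁,…,u'_H) be two valid occupancy measures in a layered episodic MDP, meaning each u_h is a probability distribution on X_h × A and Eᵀu_{h+1} = Pᵀ_h u_h (and similarly for u'), where Eᵀ takes the state marginal and Pᵀ_h is the transition pushforward. Then for each layer h, D(u_h ‖ u'_h) ≤ Σ_{k=1}^{h} D_C(u_k ‖ u'_k), where D_C(u_k‖u'_k) = Σ_{x,a} u_k(x,a) log(π_{u,k}(a|x)/π_{u',k}(a|x)) is the conditional relative entropy with π_{u,k}(a|x) = u_k(x,a)/Σ_{a'} u_k(x,a'). -/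
open Finset

lemma dpi_aux {ι κ : Type*} [Fintype ι] [Fintype κ]
    (K : ι → κ → ℝ) (hK : ∀ p x', 0 ≤ K p x') (hKrow : ∀ p, ∑ x', K p x' = 1)
    (u u' : ι → ℝ) (hu : ∀ p, 0 < u p) (hu' : ∀ p, 0 < u' p)
    (q q' : κ → ℝ) (hq : ∀ x', q x' = ∑ p, K p x' * u p)
    (hq' : ∀ x', q' x' = ∑ p, K p x' * u' p)
    (hqpos : ∀ x', 0 < q x') (hq'pos : ∀ x', 0 < q' x') :
    ∑ x', q x' * Real.log (q x' / q' x') ≤ ∑ p, u p * Real.log (u p / u' p) := by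
  have hdiff : ∑ p, u p * Real.log (u p / u' p) - ∑ x', q x' * Real.log (q x' / q' x')
      = ∑ x', ∑ p, K p x' * u p * Real.log ((u p / u' p) * (q' x' / q x')) := by
    have hpt : ∀ x' p, K p x' * u p * Real.log ((u p / u' p) * (q' x' / q x'))
        = K p x' * (u p * Real.log (u p / u' p))
          - K p x' * u p * Real.log (q x' / q' x') := by
      intro x' p
      rw [Real.log_mul (div_pos (hu p) (hu' p)).ne'
          (div_pos (hq'pos x') (hqpos x')).ne',
        Real.log_div (hq'pos x').ne' (hqpos x').ne',
        Real.log_div (hqpos x').ne' (hq'pos x').ne']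
      ring
    simp_rw [hpt, Finset.sum_sub_distrib]
    congr 1
    · rw [Finset.sum_comm]
      refine Finset.sum_congr rfl fun p _ => ?_
      rw [← Finset.sum_mul, hKrow, one_mul]
    · refine Finset.sum_congr rfl fun x' _ => ?_
      rw [hq, Finset.sum_mul]
  have hterm : ∀ x' ∈ Finset.univ, ∀ p ∈ Finset.univ,
      K p x' * u p - q x' / q' x' * (K p x' * u' p)
      ≤ K p x' * u p * Real.log ((u p / u' p) * (q' x' / q x')) := by
    intro x' _ p _
    have htpos : (0:ℝ) < (u p / u' p) * (q' x' / q x') :=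
      mul_pos (div_pos (hu p) (hu' p)) (div_pos (hq'pos x') (hqpos x'))
    have hl : 1 - ((u p / u' p) * (q' x' / q x'))⁻¹
        ≤ Real.log ((u p / u' p) * (q' x' / q x')) := by
      have h2 := Real.log_le_sub_one_of_pos (inv_pos.mpr htpos)
      rw [Real.log_inv] at h2
      linarith
    have h3 := mul_le_mul_of_nonneg_left hl (mul_nonneg (hK p x') (hu p).le)
    have hu0 := (hu p).ne'
    have hu'0 := (hu' p).ne'
    have hq0 := (hqpos x').ne'
    have hq'0 := (hq'pos x').ne'
    calc K p x' * u p - q x' / q' x' * (K p x' * u' p)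
        = K p x' * u p * (1 - ((u p / u' p) * (q' x' / q x'))⁻¹) := by
          field_simp
      _ ≤ _ := h3
  have hsum0 : ∑ x', ∑ p, (K p x' * u p - q x' / q' x' * (K p x' * u' p)) = 0 := by
    have hx : ∀ x', ∑ p, (K p x' * u p - q x' / q' x' * (K p x' * u' p)) = 0 := by
      intro x'
      rw [Finset.sum_sub_distrib, ← hq, ← Finset.mul_sum, ← hq',
        div_mul_cancel₀ _ (hq'pos x').ne', sub_self]
    simp [hx]
  have hge : 0 ≤ ∑ x', ∑ p, K p x' * u p * Real.log ((u p / u' p) * (q' x' / q x')) := by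
    calc (0:ℝ) = ∑ x', ∑ p, (K p x' * u p - q x' / q' x' * (K p x' * u' p)) := hsum0.symm
      _ ≤ _ := Finset.sum_le_sum fun x' hx' => Finset.sum_le_sum (hterm x' hx')
  linarith [hdiff, hge]

lemma chain_rule_kl {σ A : Type*} [Fintype σ] [Fintype A] [Nonempty A]
    (u u' : σ × A → ℝ) (hu : ∀ p, 0 < u p) (hu' : ∀ p, 0 < u' p) :
    ∑ p, u p * Real.log (u p / u' p)
      = ∑ x, (∑ a, u (x, a)) * Real.log ((∑ a, u (x, a)) / (∑ a, u' (x, a)))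
        + ∑ p, u p * Real.log
            ((u p / ∑ a', u (p.1, a')) / (u' p / ∑ a', u' (p.1, a'))) := by
  have hm : ∀ x : σ, 0 < ∑ a, u (x, a) :=
    fun x => Finset.sum_pos (fun a _ => hu (x, a)) Finset.univ_nonempty
  have hm' : ∀ x : σ, 0 < ∑ a, u' (x, a) :=
    fun x => Finset.sum_pos (fun a _ => hu' (x, a)) Finset.univ_nonempty
  have hpt : ∀ p : σ × A, u p * Real.log (u p / u' p)
      = u p * Real.log ((∑ a, u (p.1, a)) / (∑ a, u' (p.1, a)))
        + u p * Real.log ((u p / ∑ a', u (p.1, a')) / (u' p / ∑ a', u' (p.1, a'))) := by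
    intro p
    have h1 := (hm p.1).ne'
    have h2 := (hm' p.1).ne'
    have h3 := (hu p).ne'
    have h4 := (hu' p).ne'
    have heq : u p / u' p
        = ((∑ a, u (p.1, a)) / (∑ a, u' (p.1, a)))
          * ((u p / ∑ a', u (p.1, a')) / (u' p / ∑ a', u' (p.1, a'))) := by
      field_simp
    rw [heq, Real.log_mul (div_pos (hm p.1) (hm' p.1)).ne'
      (div_pos (div_pos (hu p) (hm p.1)) (div_pos (hu' p) (hm' p.1))).ne', mul_add]
  rw [Finset.sum_congr rfl (fun p _ => hpt p), Finset.sum_add_distrib]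
  congr 1
  rw [Fintype.sum_prod_type]
  refine Finset.sum_congr rfl fun x _ => ?_
  rw [Finset.sum_mul]

/-- In a layered episodic MDP (layer `0` a singleton, transitions from layer `h` to
layer `h+1` via the kernel `P h`), for any two occupancy measures `u, u'` satisfying the
flow constraints, the KL divergence at layer `h` is bounded by the sum of the
conditional KL divergences over layers `0,…,h`. -/
theorem occupancy_kl_le_sum_conditional_kl
    {X : ℕ → Type*} [∀ h, Fintype (X h)] [Unique (X 0)]
    {A : Type*} [Fintype A]
    (P : ∀ h, X h × A → X (h + 1) → ℝ)
    (hPnonneg : ∀ h p x', 0 ≤ P h p x')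
    (hProw : ∀ h p, ∑ x', P h p x' = 1)
    (u u' : ∀ h, X h × A → ℝ)
    (hupos : ∀ h p, 0 < u h p) (hu'pos : ∀ h p, 0 < u' h p)
    (husum : ∀ h, ∑ p, u h p = 1) (hu'sum : ∀ h, ∑ p, u' h p = 1)
    (huflow : ∀ h x', ∑ a, u (h + 1) (x', a) = ∑ p, P h p x' * u h p)
    (hu'flow : ∀ h x', ∑ a, u' (h + 1) (x', a) = ∑ p, P h p x' * u' h p)
    (h : ℕ) :
    ∑ p, u h p * Real.log (u h p / u' h p)
      ≤ ∑ k ∈ Finset.range (h + 1), ∑ p : X k × A,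
          u k p * Real.log
            ((u k p / ∑ a', u k (p.1, a')) / (u' k p / ∑ a', u' k (p.1, a'))) := by
  have hA : Nonempty A := by
    by_contra hA
    rw [not_nonempty_iff] at hA
    have h1 := husum 0
    rw [Fintype.sum_prod_type] at h1
    simp at h1
  induction h with
  | zero =>
    rw [Finset.sum_range_one,
      chain_rule_kl (u 0) (u' 0) (hupos 0) (hu'pos 0)]
    have hm1 : ∀ x : X 0, ∑ a, u 0 (x, a) = 1 := by
      intro x
      have h1 := husum 0
      rw [Fintype.sum_prod_type, Fintype.sum_unique] at h1
      rwa [Unique.eq_default x]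
    have hm1' : ∀ x : X 0, ∑ a, u' 0 (x, a) = 1 := by
      intro x
      have h1 := hu'sum 0
      rw [Fintype.sum_prod_type, Fintype.sum_unique] at h1
      rwa [Unique.eq_default x]
    have hz : ∑ x : X 0, (∑ a, u 0 (x, a)) * Real.log ((∑ a, u 0 (x, a)) / (∑ a, u' 0 (x, a))) = 0 := by
      simp [hm1, hm1']
    rw [hz, zero_add]
  | succ n ih =>
    rw [chain_rule_kl (u (n + 1)) (u' (n + 1)) (hupos (n + 1)) (hu'pos (n + 1)),
      Finset.sum_range_succ]
    have hdpi : ∑ x' : X (n + 1), (∑ a, u (n + 1) (x', a))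
          * Real.log ((∑ a, u (n + 1) (x', a)) / (∑ a, u' (n + 1) (x', a)))
        ≤ ∑ p, u n p * Real.log (u n p / u' n p) := by
      apply dpi_aux (P n) (hPnonneg n) (hProw n) (u n) (u' n) (hupos n) (hu'pos n)
        _ _ (huflow n) (hu'flow n)
      · intro x'; exact Finset.sum_pos (fun a _ => hupos (n + 1) (x', a)) Finset.univ_nonempty
      · intro x'; exact Finset.sum_pos (fun a _ => hu'pos (n + 1) (x', a)) Finset.univ_nonempty
    linarith [hdpi, ih]
end

section
/- Let p and q be probability distributions on a finite set. Then ‖p - q‖₁ ≤ √(2 D(p‖q)). -/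
open Real Finset

private noncomputable def Gfun (t : ℝ) : ℝ := (t + 1) * Real.log t - 2 * (t - 1)
private noncomputable def Ffun (t : ℝ) : ℝ :=
  (t * Real.log t - t + 1) * (2 * t + 4) - 3 * (t - 1) ^ 2

private lemma G_hasDerivAt {t : ℝ} (ht : 0 < t) :
    HasDerivAt Gfun (Real.log t + 1 / t - 1) t := by
  have h1 : HasDerivAt Real.log (1 / t) t := by
    simpa [one_div] using Real.hasDerivAt_log ht.ne'
  have h2 : HasDerivAt (fun t : ℝ => (t + 1) * Real.log t)
      (1 * Real.log t + (t + 1) * (1 / t)) t :=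
    ((hasDerivAt_id t).add_const 1).mul h1
  have h3 : HasDerivAt (fun t : ℝ => 2 * (t - 1)) 2 t := by
    simpa using ((hasDerivAt_id t).sub_const 1).const_mul 2
  have := h2.sub h3
  refine this.congr_deriv ?_
  rw [mul_one_div, add_div, div_self ht.ne']
  ring

private lemma F_hasDerivAt {t : ℝ} (ht : 0 < t) :
    HasDerivAt Ffun (4 * Gfun t) t := by
  have hlog : HasDerivAt Real.log (1 / t) t := by
    simpa [one_div] using Real.hasDerivAt_log ht.ne'
  have h1 : HasDerivAt (fun t : ℝ => t * Real.log t - t + 1)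
      ((1 * Real.log t + t * (1 / t)) - 1) t :=
    (((hasDerivAt_id t).mul hlog).sub (hasDerivAt_id t)).add_const 1
  have h2 : HasDerivAt (fun t : ℝ => 2 * t + 4) 2 t := by
    simpa using ((hasDerivAt_id t).const_mul 2).add_const 4
  have h3 : HasDerivAt (fun t : ℝ => 3 * (t - 1) ^ 2) (3 * (2 * (t - 1))) t := by
    have := (((hasDerivAt_id t).sub_const 1).pow 2).const_mul 3
    simpa using this
  have := (h1.mul h2).sub h3
  refine this.congr_deriv ?_
  have : t * (1 / t) = 1 := by field_simp
  rw [this, Gfun]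
  ring

private lemma G_sign {t : ℝ} (ht : 0 < t) :
    (1 ≤ t → 0 ≤ Gfun t) ∧ (t ≤ 1 → Gfun t ≤ 0) := by
  have hmono : MonotoneOn Gfun (Set.Ioi (0 : ℝ)) := by
    apply monotoneOn_of_deriv_nonneg (convex_Ioi 0)
    · exact fun x hx => (G_hasDerivAt hx).continuousAt.continuousWithinAt
    · intro x hx
      rw [interior_Ioi] at hx
      exact (G_hasDerivAt hx).differentiableAt.differentiableWithinAt
    · intro x hx
      rw [interior_Ioi] at hx
      rw [(G_hasDerivAt hx).deriv]
      have := Real.one_sub_inv_le_log_of_pos hx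
      rw [inv_eq_one_div] at this
      linarith
  have hG1 : Gfun 1 = 0 := by simp [Gfun]
  constructor
  · intro h1
    have := hmono (Set.mem_Ioi.2 one_pos) (Set.mem_Ioi.2 ht) h1
    linarith
  · intro h1
    have := hmono (Set.mem_Ioi.2 ht) (Set.mem_Ioi.2 one_pos) h1
    linarith

private lemma F_nonneg {t : ℝ} (ht : 0 < t) : 0 ≤ Ffun t := by
  have hF1 : Ffun 1 = 0 := by simp [Ffun]
  rcases le_total 1 t with h | h
  · have hmono : MonotoneOn Ffun (Set.Ici (1 : ℝ)) := by
      apply monotoneOn_of_deriv_nonneg (convex_Ici 1)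
      · exact fun x hx => (F_hasDerivAt (lt_of_lt_of_le one_pos hx)).continuousAt.continuousWithinAt
      · intro x hx
        rw [interior_Ici] at hx
        exact (F_hasDerivAt (lt_trans one_pos hx)).differentiableAt.differentiableWithinAt
      · intro x hx
        rw [interior_Ici] at hx
        rw [(F_hasDerivAt (lt_trans one_pos hx)).deriv]
        have := (G_sign (lt_trans one_pos hx)).1 hx.le
        linarith
    have := hmono (Set.mem_Ici.2 le_rfl) (Set.mem_Ici.2 h) h
    linarith
  · have hanti : AntitoneOn Ffun (Set.Ioc (0 : ℝ) 1) := by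
      apply antitoneOn_of_deriv_nonpos (convex_Ioc 0 1)
      · exact fun x hx => (F_hasDerivAt hx.1).continuousAt.continuousWithinAt
      · intro x hx
        rw [interior_Ioc] at hx
        exact (F_hasDerivAt hx.1).differentiableAt.differentiableWithinAt
      · intro x hx
        rw [interior_Ioc] at hx
        rw [(F_hasDerivAt hx.1).deriv]
        have := (G_sign hx.1).2 hx.2.le
        linarith
    have := hanti (Set.mem_Ioc.2 ⟨ht, h⟩) (Set.mem_Ioc.2 ⟨one_pos, le_rfl⟩) h
    linarith

/-- Pointwise inequality: `3(x-y)²/(2x+4y) ≤ x log(x/y) - x + y`. -/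
private lemma pointwise_ineq {x y : ℝ} (hx : 0 ≤ x) (hy : 0 < y) :
    3 * (x - y) ^ 2 / (2 * x + 4 * y) ≤ x * Real.log (x / y) - x + y := by
  have hd : 0 < 2 * x + 4 * y := by linarith
  rcases eq_or_lt_of_le hx with h | h
  · rw [← h]
    have h0 : (3:ℝ) * (0 - y) ^ 2 / (2 * 0 + 4 * y) ≤ y := by
      rw [div_le_iff₀ (by linarith)]
      nlinarith
    simpa using h0
  · set t := x / y with htdef
    have ht : 0 < t := div_pos h hy
    have hF := F_nonneg ht
    rw [Ffun] at hF
    have hx' : x = t * y := by rw [htdef, div_mul_cancel₀ x hy.ne']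
    have key : t * Real.log t - t + 1 ≥ 3 * (t - 1) ^ 2 / (2 * t + 4) := by
      rw [ge_iff_le, div_le_iff₀ (by linarith)]
      nlinarith
    have hne1 : (2 * t + 4) ≠ 0 := by nlinarith
    have hne2 : (2 * x + 4 * y) ≠ 0 := hd.ne'
    have h2 : 3 * (x - y) ^ 2 / (2 * x + 4 * y) = y * (3 * (t - 1) ^ 2 / (2 * t + 4)) := by
      rw [div_eq_iff hne2, hx']
      field_simp
    rw [h2]
    calc y * (3 * (t - 1) ^ 2 / (2 * t + 4)) ≤ y * (t * Real.log t - t + 1) :=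
          mul_le_mul_of_nonneg_left key hy.le
      _ = x * Real.log (x / y) - x + y := by rw [← htdef, hx']; ring

/-- Pinsker's inequality for finitely supported probability vectors. -/
theorem pinsker_inequality {S : Type*} [Fintype S]
    (p q : S → ℝ) (hp : ∀ s, 0 ≤ p s) (hq : ∀ s, 0 < q s)
    (hpsum : ∑ s, p s = 1) (hqsum : ∑ s, q s = 1) :
    ∑ s, |p s - q s| ≤ Real.sqrt (2 * ∑ s, p s * Real.log (p s / q s)) := by
  set D := ∑ s, p s * Real.log (p s / q s) with hD
  have hw : ∀ s, (0:ℝ) < (2 * p s + 4 * q s) / 3 := fun s => by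
    have := hp s; have := hq s; positivity
  -- Sedrakyan / Cauchy-Schwarz
  have hCS := sq_sum_div_le_sum_sq_div Finset.univ (fun s => |p s - q s|)
    (g := fun s => (2 * p s + 4 * q s) / 3) (fun s _ => hw s)
  have hwsum : ∑ s, (2 * p s + 4 * q s) / 3 = 2 := by
    rw [← Finset.sum_div, Finset.sum_add_distrib, ← Finset.mul_sum, ← Finset.mul_sum,
      hpsum, hqsum]
    norm_num
  rw [hwsum] at hCS
  have hterm : ∀ s, |p s - q s| ^ 2 / ((2 * p s + 4 * q s) / 3)
      ≤ p s * Real.log (p s / q s) - p s + q s := by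
    intro s
    have := pointwise_ineq (hp s) (hq s)
    rw [sq_abs]
    rw [div_div_eq_mul_div, mul_comm ((p s - q s)^2) 3]
    linarith [this]
  have hsum2 : ∑ s, (|p s - q s| ^ 2 / ((2 * p s + 4 * q s) / 3)) ≤ D := by
    calc ∑ s, (|p s - q s| ^ 2 / ((2 * p s + 4 * q s) / 3))
        ≤ ∑ s, (p s * Real.log (p s / q s) - p s + q s) :=
          Finset.sum_le_sum fun s _ => hterm s
      _ = D := by
          rw [Finset.sum_add_distrib, Finset.sum_sub_distrib, hpsum, hqsum, hD]; ring
  apply Real.le_sqrt_of_sq_le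
  have : (∑ s, |p s - q s|) ^ 2 / 2 ≤ D := le_trans hCS hsum2
  linarith
end
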